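/- Formulation (CP1) is a valid formulation of the p-center problem: the minimum of f(y, z) = D^0 + Σ_{k=1}^K (D^k − D^{k−1}) z^k over all integer feasible solutions (y, z) of (CP1) equals the optimal radius opt(d, p). -/

import Mathlib

open Finset
open scoped Classical

noncomputable section

/-- Radius of a nonempty set `S` of open facilities: the largest, over clients `i`,
of the distance from `i` to the closest facility in `S`. -/
def radius {N M : ℕ} (hN : 0 < N) (d : Fin N → Fin M → ℝ)
    (S : Finset (Fin M)) (hS : S.Nonempty) : ℝ :=
  (univ : Finset (Fin N)).sup' ⟨⟨0, hN⟩, mem_univ _⟩ fun i => S.inf' hS fun j => d i j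

/-- Optimal radius of the `p`-center problem. -/
def opt {N M : ℕ} (hN : 0 < N) (d : Fin N → Fin M → ℝ) (p : ℕ) : ℝ :=
  sInf { r | ∃ S : Finset (Fin M), ∃ hS : S.Nonempty, S.card ≤ p ∧ r = radius hN d S hS }

/-- Objective function `f(y, z) = D^0 + ∑_{k=1}^K (D^k - D^{k-1}) z^k`
(`z` is 0-indexed: entry `k : Fin K` stands for the paper's `z^{k+1}`). -/
def obj {K : ℕ} (D : Fin (K + 1) → ℝ) (z : Fin K → ℝ) : ℝ :=
  D 0 + ∑ k : Fin K, (D k.succ - D k.castSucc) * z k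

/-- Ordering constraints `z^k ≥ z^{k+1}`, `k ∈ {1, …, K-1}` (0-indexed `z`). -/
def Ordered {K : ℕ} (z : Fin K → ℝ) : Prop :=
  ∀ k : Fin K, ∀ h : (k : ℕ) + 1 < K, z ⟨(k : ℕ) + 1, h⟩ ≤ z k

/-- `ActiveIdx d D i k` says that the paper index `κ = k+1` belongs to `S_i ∪ {K}`:
either `κ ≤ K - 1` and some facility `j` satisfies `d i j = D^κ`, or `κ = K`. -/
def ActiveIdx {N M K : ℕ} (d : Fin N → Fin M → ℝ) (D : Fin (K + 1) → ℝ)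
    (i : Fin N) (k : Fin K) : Prop :=
  ((k : ℕ) + 1 < K ∧ ∃ j, d i j = D k.succ) ∨ (k : ℕ) + 1 = K

/-- LP-relaxed feasible set of formulation `(P2)`. -/
def FP2 {N M K : ℕ} (d : Fin N → Fin M → ℝ) (D : Fin (K + 1) → ℝ) (p : ℕ) :
    Set ((Fin M → ℝ) × (Fin K → ℝ)) :=
  { yz | (∀ j, 0 ≤ yz.1 j ∧ yz.1 j ≤ 1) ∧ (∀ k, 0 ≤ yz.2 k ∧ yz.2 k ≤ 1) ∧
    1 ≤ ∑ j, yz.1 j ∧ ∑ j, yz.1 j ≤ (p : ℝ) ∧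
    ∀ i : Fin N, ∀ k : Fin K,
      1 ≤ yz.2 k + ∑ j ∈ univ.filter (fun j => d i j < D k.succ), yz.1 j }

/-- LP-relaxed feasible set of formulation `(CP1)`. -/
def FCP1 {N M K : ℕ} (d : Fin N → Fin M → ℝ) (D : Fin (K + 1) → ℝ) (p : ℕ) :
    Set ((Fin M → ℝ) × (Fin K → ℝ)) :=
  { yz | (∀ j, 0 ≤ yz.1 j ∧ yz.1 j ≤ 1) ∧ (∀ k, 0 ≤ yz.2 k ∧ yz.2 k ≤ 1) ∧
    1 ≤ ∑ j, yz.1 j ∧ ∑ j, yz.1 j ≤ (p : ℝ) ∧ Ordered yz.2 ∧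
    ∀ i : Fin N, ∀ k : Fin K, ActiveIdx d D i k →
      1 ≤ yz.2 k + ∑ j ∈ univ.filter (fun j => d i j < D k.succ), yz.1 j }

/-- Integer feasible solutions of formulation `(CP1)`. -/
def CP1Int {N M K : ℕ} (d : Fin N → Fin M → ℝ) (D : Fin (K + 1) → ℝ) (p : ℕ) :
    Set ((Fin M → ℝ) × (Fin K → ℝ)) :=
  { yz | (∀ j, yz.1 j = 0 ∨ yz.1 j = 1) ∧ (∀ k, yz.2 k = 0 ∨ yz.2 k = 1) ∧
    1 ≤ ∑ j, yz.1 j ∧ ∑ j, yz.1 j ≤ (p : ℝ) ∧ Ordered yz.2 ∧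
    ∀ i : Fin N, ∀ k : Fin K, ActiveIdx d D i k →
      1 ≤ yz.2 k + ∑ j ∈ univ.filter (fun j => d i j < D k.succ), yz.1 j }

/-- LP-relaxed feasible set of formulation `(CP2)`. -/
def FCP2 {N M K : ℕ} (d : Fin N → Fin M → ℝ) (D : Fin (K + 1) → ℝ) (p : ℕ) :
    Set ((Fin M → ℝ) × ℝ) :=
  { yr | (∀ j, 0 ≤ yr.1 j ∧ yr.1 j ≤ 1) ∧ 0 ≤ yr.2 ∧ yr.2 ≤ (K : ℝ) ∧
    1 ≤ ∑ j, yr.1 j ∧ ∑ j, yr.1 j ≤ (p : ℝ) ∧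
    ∀ i : Fin N, ∀ k : Fin K, ActiveIdx d D i k →
      ((k : ℕ) + 1 : ℝ) ≤ yr.2 +
        ((k : ℕ) + 1 : ℝ) * ∑ j ∈ univ.filter (fun j => d i j < D k.succ), yr.1 j }

/-- Integer feasible solutions of formulation `(CP2)`. -/
def CP2Int {N M K : ℕ} (d : Fin N → Fin M → ℝ) (D : Fin (K + 1) → ℝ) (p : ℕ)
    (y : Fin M → ℝ) (r : ℤ) : Prop :=
  (∀ j, y j = 0 ∨ y j = 1) ∧ 0 ≤ r ∧ r ≤ (K : ℤ) ∧
    1 ≤ ∑ j, y j ∧ ∑ j, y j ≤ (p : ℝ) ∧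
    ∀ i : Fin N, ∀ k : Fin K, ActiveIdx d D i k →
      ((k : ℕ) + 1 : ℝ) ≤ (r : ℝ) +
        ((k : ℕ) + 1 : ℝ) * ∑ j ∈ univ.filter (fun j => d i j < D k.succ), y j

/-- Telescoping sum helper. -/
lemma tele_sum (f : ℕ → ℝ) (t K : ℕ) (ht : t ≤ K) :
    ∑ k ∈ Finset.range K, (if k < t then f (k + 1) - f k else 0) = f t - f 0 := by
  rw [← Finset.sum_filter]
  have h : (Finset.range K).filter (fun k => k < t) = Finset.range t := by
    ext x; simp; omega
  rw [h, Finset.sum_range_sub]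

/-- The auxiliary extension of `D` to `ℕ`. -/
def Dn {K : ℕ} (D : Fin (K + 1) → ℝ) (n : ℕ) : ℝ :=
  D ⟨min n K, Nat.lt_succ_of_le (min_le_right _ _)⟩

lemma Dn_succ {K : ℕ} (D : Fin (K + 1) → ℝ) (k : Fin K) :
    Dn D ((k : ℕ) + 1) = D k.succ := by
  unfold Dn; congr 1; ext; simp [Nat.min_eq_left k.isLt]

lemma Dn_castSucc {K : ℕ} (D : Fin (K + 1) → ℝ) (k : Fin K) :
    Dn D (k : ℕ) = D k.castSucc := by
  unfold Dn; congr 1; ext; simp [Nat.min_eq_left k.isLt.le]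

lemma Dn_of_le {K : ℕ} (D : Fin (K + 1) → ℝ) (t : Fin (K + 1)) :
    Dn D (t : ℕ) = D t := by
  unfold Dn; congr 1; ext; simp [Nat.min_eq_left (Nat.lt_succ_iff.mp t.isLt)]

/-- Monotone propagation for ordered binary vectors. -/
lemma ordered_le {K : ℕ} (z : Fin K → ℝ) (hz : Ordered z) (a : Fin K) :
    ∀ n, ∀ h : n < K, (a : ℕ) ≤ n → z ⟨n, h⟩ ≤ z a := by
  intro n
  induction n with
  | zero =>
    intro h hle
    have : a = ⟨0, h⟩ := Fin.val_injective (show (a : ℕ) = 0 by omega)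
    rw [this]
  | succ n ih =>
    intro h hle
    rcases Nat.lt_or_ge (a : ℕ) (n + 1) with h' | h'
    · have hn : n < K := by omega
      exact (hz ⟨n, hn⟩ h).trans (ih hn (by omega))
    · have : a = ⟨n + 1, h⟩ := Fin.val_injective (show (a : ℕ) = n + 1 by omega)
      rw [this]

lemma obj_ge_D0 {K : ℕ} (D : Fin (K + 1) → ℝ) (hD : StrictMono D)
    (z : Fin K → ℝ) (hz : ∀ k, 0 ≤ z k) : D 0 ≤ obj D z := by
  unfold obj
  have : (0 : ℝ) ≤ ∑ k : Fin K, (D k.succ - D k.castSucc) * z k := by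
    apply Finset.sum_nonneg
    intro k _
    exact mul_nonneg (sub_nonneg.mpr (hD (Fin.castSucc_lt_succ : k.castSucc < k.succ)).le) (hz k)
  linarith

/-- If `z` is nonnegative and at least `1` up to index `m`, then `obj ≥ D (m+1)`. -/
lemma obj_ge {K : ℕ} (D : Fin (K + 1) → ℝ) (hD : StrictMono D)
    (z : Fin K → ℝ) (hz0 : ∀ k, 0 ≤ z k) (m : Fin K)
    (hm : ∀ k : Fin K, (k : ℕ) ≤ (m : ℕ) → 1 ≤ z k) :
    D m.succ ≤ obj D z := by
  unfold obj
  have hsum : ∑ k : Fin K, (if (k : ℕ) < (m : ℕ) + 1 then Dn D ((k : ℕ) + 1) - Dn D (k : ℕ) else 0)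
      ≤ ∑ k : Fin K, (D k.succ - D k.castSucc) * z k := by
    apply Finset.sum_le_sum
    intro k _
    rw [Dn_succ, Dn_castSucc]
    have hd : (0 : ℝ) ≤ D k.succ - D k.castSucc :=
      sub_nonneg.mpr (hD (Fin.castSucc_lt_succ : k.castSucc < k.succ)).le
    split_ifs with h
    · have := hm k (by omega)
      nlinarith
    · exact mul_nonneg hd (hz0 k)
  have htel : ∑ k : Fin K, (if (k : ℕ) < (m : ℕ) + 1 then Dn D ((k : ℕ) + 1) - Dn D (k : ℕ) else 0)
      = Dn D ((m : ℕ) + 1) - Dn D 0 := by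
    rw [Fin.sum_univ_eq_sum_range (fun k => if k < (m : ℕ) + 1 then Dn D (k + 1) - Dn D k else 0)]
    exact tele_sum (Dn D) ((m : ℕ) + 1) K (by omega)
  have h1 : Dn D ((m : ℕ) + 1) = D m.succ := Dn_succ D m
  have h0 : Dn D 0 = D 0 := by
    have := Dn_of_le D 0; simpa using this
  rw [h1, h0] at htel
  linarith

/-- Sum of an indicator vector. -/
lemma sum_indicator {M : ℕ} (S : Finset (Fin M)) :
    ∑ j, (if j ∈ S then (1 : ℝ) else 0) = (S.card : ℝ) := by
  simp

/-- The radius is an entry of `D`. -/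
lemma radius_mem_range {N M K : ℕ} (hN : 0 < N) (d : Fin N → Fin M → ℝ)
    (D : Fin (K + 1) → ℝ)
    (hrange : Set.range D = { x : ℝ | ∃ i j, d i j = x })
    (S : Finset (Fin M)) (hS : S.Nonempty) :
    ∃ t : Fin (K + 1), D t = radius hN d S hS := by
  obtain ⟨i, -, hi⟩ := Finset.exists_mem_eq_sup' (⟨⟨0, hN⟩, mem_univ _⟩ :
    (univ : Finset (Fin N)).Nonempty) (fun i => S.inf' hS fun j => d i j)
  obtain ⟨j, -, hj⟩ := Finset.exists_mem_eq_inf' hS (fun j => d i j)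
  have : d i j ∈ Set.range D := by
    rw [hrange]; exact ⟨i, j, rfl⟩
  obtain ⟨t, ht⟩ := this
  exact ⟨t, by rw [ht, radius, hi, hj]⟩

/-- Direction 1: from a feasible integer solution, construct a center set with
`radius ≤ obj`. -/
lemma feas_to_set {N M K : ℕ} (hN : 0 < N)
    (d : Fin N → Fin M → ℝ) (D : Fin (K + 1) → ℝ) (hD : StrictMono D)
    (hrange : Set.range D = { x : ℝ | ∃ i j, d i j = x }) (p : ℕ)
    (y : Fin M → ℝ) (z : Fin K → ℝ) (h : (y, z) ∈ CP1Int d D p) :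
    ∃ S : Finset (Fin M), ∃ hS : S.Nonempty, S.card ≤ p ∧
      radius hN d S hS ≤ obj D z := by
  obtain ⟨hy01, hz01, hy1, hyp, hzord, hcon⟩ := h
  dsimp only at hy01 hz01 hy1 hyp hzord hcon
  set S : Finset (Fin M) := univ.filter (fun j => y j = 1) with hSdef
  have hyeq : ∀ j, y j = if j ∈ S then (1 : ℝ) else 0 := by
    intro j
    rcases hy01 j with h | h <;> simp [hSdef, h]
  have hsum : ∑ j, y j = (S.card : ℝ) := by
    rw [Finset.sum_congr rfl (fun j _ => hyeq j)]; exact sum_indicator S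
  have hScard1 : 1 ≤ S.card := by
    by_contra h
    have : S.card = 0 := by omega
    rw [hsum, this] at hy1; norm_num at hy1
  have hS : S.Nonempty := Finset.card_pos.mp (by omega)
  have hScardp : S.card ≤ p := by
    have := hyp; rw [hsum] at this; exact_mod_cast this
  refine ⟨S, hS, hScardp, ?_⟩
  rw [radius]
  apply Finset.sup'_le
  intro i _
  -- v = min distance
  obtain ⟨j0, hj0S, hj0⟩ := Finset.exists_mem_eq_inf' hS (fun j => d i j)
  have hv : d i j0 ∈ Set.range D := by rw [hrange]; exact ⟨i, j0, rfl⟩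
  obtain ⟨κ, hκ⟩ := hv
  rw [hj0, ← hκ]
  rcases Nat.eq_zero_or_pos (κ : ℕ) with hκ0 | hκpos
  · have : κ = 0 := by ext; simpa using hκ0
    rw [this]
    exact obj_ge_D0 D hD z (fun k => by rcases hz01 k with h | h <;> simp [h])
  · -- κ ≥ 1, consider m = κ - 1
    have hmK : (κ : ℕ) - 1 < K := by have := κ.isLt; omega
    set m : Fin K := ⟨(κ : ℕ) - 1, hmK⟩ with hmdef
    have hmsucc : m.succ = κ := by ext; simp [hmdef, Fin.val_succ]; omega
    have hactive : ActiveIdx d D i m := by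
      rcases Nat.lt_or_ge ((m : ℕ) + 1) K with h' | h'
      · exact Or.inl ⟨h', ⟨j0, by rw [hmsucc, hκ]⟩⟩
      · refine Or.inr ?_
        have h2 : (m : ℕ) = (κ : ℕ) - 1 := by rw [hmdef]
        have h3 := κ.isLt
        omega
    have hcm := hcon i m hactive
    have hzm : z m = 1 := by
      rcases hz01 m with h0 | h1
      · exfalso
        rw [h0, zero_add] at hcm
        have : ∃ j ∈ univ.filter (fun j => d i j < D m.succ), y j ≠ 0 := by
          by_contra hno
          push_neg at hno
          rw [Finset.sum_eq_zero hno] at hcm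
          norm_num at hcm
        obtain ⟨j1, hj1mem, hj1⟩ := this
        have hj1lt : d i j1 < D m.succ := (Finset.mem_filter.mp hj1mem).2
        have hj1S : j1 ∈ S := by
          rcases hy01 j1 with h | h
          · exact absurd h hj1
          · simp [hSdef, h]
        have : S.inf' hS (fun j => d i j) ≤ d i j1 := Finset.inf'_le _ hj1S
        rw [hj0, ← hκ, ← hmsucc] at this
        linarith
      · exact h1
    have : D m.succ ≤ obj D z := by
      apply obj_ge D hD z (fun k => by rcases hz01 k with h | h <;> simp [h]) m
      intro k hk
      have := ordered_le z hzord k (m : ℕ) m.isLt hk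
      have hkm : z m ≤ z k := by
        convert this using 2
      rw [hzm] at hkm
      linarith
    rw [← hmsucc]; exact this

/-- Direction 2: from a center set, construct a feasible integer solution with
`obj = radius`. -/
lemma set_to_feas {N M K : ℕ} (hN : 0 < N)
    (d : Fin N → Fin M → ℝ) (D : Fin (K + 1) → ℝ) (hD : StrictMono D)
    (hrange : Set.range D = { x : ℝ | ∃ i j, d i j = x }) (p : ℕ)
    (S : Finset (Fin M)) (hS : S.Nonempty) (hcard : S.card ≤ p) :
    ∃ yz ∈ CP1Int d D p, obj D yz.2 = radius hN d S hS := by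
  obtain ⟨t, ht⟩ := radius_mem_range hN d D hrange S hS
  set y : Fin M → ℝ := fun j => if j ∈ S then 1 else 0 with hydef
  set z : Fin K → ℝ := fun k => if (k : ℕ) < (t : ℕ) then 1 else 0 with hzdef
  have hsum : ∑ j, y j = (S.card : ℝ) := sum_indicator S
  refine ⟨(y, z), ⟨?_, ?_, ?_, ?_, ?_, ?_⟩, ?_⟩
  · intro j; by_cases h : j ∈ S <;> simp [hydef, h]
  · intro k; by_cases h : (k : ℕ) < (t : ℕ) <;> simp [hzdef, h]
  · rw [hsum]
    have : 1 ≤ S.card := Finset.card_pos.mpr hS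
    exact_mod_cast this
  · rw [hsum]; exact_mod_cast hcard
  · intro k h
    simp only [hzdef]
    split_ifs with h1 h2 <;> norm_num
    omega
  · intro i k hact
    dsimp only
    rcases Nat.lt_or_ge (k : ℕ) (t : ℕ) with hkt | hkt
    · have hz1 : z k = 1 := by simp [hzdef, hkt]
      rw [hz1]
      have : (0 : ℝ) ≤ ∑ j ∈ univ.filter (fun j => d i j < D k.succ), y j := by
        apply Finset.sum_nonneg
        intro j _
        by_cases h : j ∈ S <;> simp [hydef, h]
      linarith
    · -- need a facility strictly within D k.succ
      obtain ⟨j0, hj0S, hj0⟩ := Finset.exists_mem_eq_inf' hS (fun j => d i j)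
      have hle : d i j0 ≤ radius hN d S hS := by
        rw [← hj0, radius]
        exact Finset.le_sup' (fun i => S.inf' hS fun j => d i j) (mem_univ i)
      have hlt : d i j0 < D k.succ := by
        have : D t < D k.succ := hD (by
          rw [Fin.lt_def]; simp [Fin.succ]; omega)
        rw [ht] at this
        linarith
      have hj0mem : j0 ∈ univ.filter (fun j => d i j < D k.succ) := by
        simp [hlt]
      have : y j0 ≤ ∑ j ∈ univ.filter (fun j => d i j < D k.succ), y j := by
        apply Finset.single_le_sum (fun j _ => ?_) hj0mem
        by_cases h : j ∈ S <;> simp [hydef, h]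
      have hy1 : y j0 = 1 := by simp [hydef, hj0S]
      have hz0 : (0:ℝ) ≤ z k := by by_cases h : (k : ℕ) < (t : ℕ) <;> simp [hzdef, h]
      linarith
  · -- obj = D t = radius
    rw [obj, ← ht]
    have heq : ∀ k : Fin K, (D k.succ - D k.castSucc) * z k
        = if (k : ℕ) < (t : ℕ) then Dn D ((k : ℕ) + 1) - Dn D (k : ℕ) else 0 := by
      intro k
      rw [Dn_succ, Dn_castSucc]
      by_cases h : (k : ℕ) < (t : ℕ) <;> simp [hzdef, h]
    rw [Finset.sum_congr rfl (fun k _ => heq k)]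
    rw [Fin.sum_univ_eq_sum_range (fun k => if k < (t : ℕ) then Dn D (k + 1) - Dn D k else 0)]
    rw [tele_sum (Dn D) (t : ℕ) K (by have := t.isLt; omega)]
    have h0 : Dn D 0 = D 0 := by have := Dn_of_le D 0; simpa using this
    rw [Dn_of_le D t, h0]
    ring

/-- `(CP1)` is a valid formulation of the `p`-center problem. -/
theorem stmt3 {N M K : ℕ} (hN : 0 < N) (hM : 0 < M)
    (d : Fin N → Fin M → ℝ) (p : ℕ) (hp1 : 1 ≤ p) (hpM : p ≤ M)
    (D : Fin (K + 1) → ℝ) (hD : StrictMono D)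
    (hrange : Set.range D = { x : ℝ | ∃ i j, d i j = x }) :
    sInf { v | ∃ yz ∈ CP1Int d D p, v = obj D yz.2 } = opt hN d p := by
  set A := { v | ∃ yz ∈ CP1Int d D p, v = obj D yz.2 } with hA
  set B := { r | ∃ S : Finset (Fin M), ∃ hS : S.Nonempty, S.card ≤ p ∧
    r = radius hN d S hS } with hB
  have hBne : B.Nonempty := by
    refine ⟨radius hN d {⟨0, hM⟩} ⟨⟨0, hM⟩, Finset.mem_singleton_self _⟩,
      {⟨0, hM⟩}, ⟨⟨0, hM⟩, Finset.mem_singleton_self _⟩, ?_, rfl⟩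
    simpa using hp1
  have hAne : A.Nonempty := by
    obtain ⟨r, S, hS, hc, hr⟩ := hBne
    obtain ⟨yz, hyz, hobj⟩ := set_to_feas hN d D hD hrange p S hS hc
    exact ⟨obj D yz.2, yz, hyz, rfl⟩
  have hbddA : BddBelow A := by
    refine ⟨D 0, fun a ha => ?_⟩
    obtain ⟨yz, hyz, rfl⟩ := ha
    exact obj_ge_D0 D hD yz.2 (fun k => by rcases hyz.2.1 k with h | h <;> simp [h])
  have hbddB : BddBelow B := by
    refine ⟨D 0, fun b hb => ?_⟩
    obtain ⟨S, hS, hc, rfl⟩ := hb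
    obtain ⟨t, ht⟩ := radius_mem_range hN d D hrange S hS
    rw [← ht]
    exact hD.monotone (Fin.zero_le t)
  rw [opt]
  apply le_antisymm
  · apply le_csInf hBne
    intro b hb
    obtain ⟨S, hS, hc, rfl⟩ := hb
    obtain ⟨yz, hyz, hobj⟩ := set_to_feas hN d D hD hrange p S hS hc
    exact csInf_le hbddA ⟨yz, hyz, hobj.symm⟩
  · apply le_csInf hAne
    intro a ha
    obtain ⟨yz, hyz, rfl⟩ := ha
    obtain ⟨S, hS, hc, hrad⟩ := feas_to_set hN d D hD hrange p yz.1 yz.2 hyz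
    exact (csInf_le hbddB ⟨S, hS, hc, rfl⟩).trans hrad
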